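/- Let B be a Ferrers board with n columns, padded with columns of height zero on the left so that ξ(B) = ⟨z_1,…,z_n⟩ has only non-negative entries. Let v_i be the number of entries of ξ(B) equal to i and M the greatest integer with v_M ≠ 0. If v_i > 1 implies v_{i+1} > 1 for all 0 ≤ i < M−1, then B is connected by a path of edges in the rook equivalence graph G(B) to a Ferrers board B′ whose root vector ξ(B′) has as its first M+1 entries the integers 0, 1, …, M−1, M in increasing order. -/

import Mathlib

/-- A (non-attacking) rook placement on the board with column heights `b`:
a set of cells (column, row) inside the board, no two sharing a column or a row.
Cells are 0-indexed: cell `(i, j)` lies in the board iff `j < b i`. -/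
def IsRookPlacement {n : ℕ} (b : Fin n → ℕ) (P : Finset (Fin n × ℕ)) : Prop :=
  (∀ c ∈ P, c.2 < b c.1) ∧
  ∀ c ∈ P, ∀ d ∈ P, c ≠ d → c.1 ≠ d.1 ∧ c.2 ≠ d.2

/-- The `k`-th rook number of the board `b`: the number of placements of `k`
non-attacking rooks on `b`. -/
noncomputable def rookNum {n : ℕ} (b : Fin n → ℕ) (k : ℕ) : ℕ :=
  Set.ncard {P : Finset (Fin n × ℕ) | IsRookPlacement b P ∧ P.card = k}

/-- Two boards are rook equivalent if all their rook numbers agree. -/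
def RookEquiv {n₁ n₂ : ℕ} (b₁ : Fin n₁ → ℕ) (b₂ : Fin n₂ → ℕ) : Prop :=
  ∀ k, rookNum b₁ k = rookNum b₂ k

/-- The root vector of a board: the (0-indexed) `i`-th entry is `i - b i`
(1-indexed: `(i-1) - b_i`). -/
def rootVec {n : ℕ} (b : Fin n → ℕ) : Fin n → ℤ := fun i => (i : ℤ) - (b i : ℤ)

/-- `b₁` is obtained from `b₂` by moving `k > 0` squares out of one column into a
single other column: the boards agree except in columns `i` and `j`, where `b₁`
has `k` more squares in column `i` and `k` fewer in column `j`. -/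
def MovesSquares {n : ℕ} (b₁ b₂ : Fin n → ℕ) : Prop :=
  ∃ (i j : Fin n) (k : ℕ), i ≠ j ∧ 0 < k ∧ b₁ i = b₂ i + k ∧ b₂ j = b₁ j + k ∧
    ∀ l, l ≠ i → l ≠ j → b₁ l = b₂ l

/-- A Ferrers board with `n` columns: a weakly increasing sequence of column heights. -/
def FerrersBoard (n : ℕ) : Type := {b : Fin n → ℕ // Monotone b}

/-- The rook equivalence graph of the equivalence class of `B`: vertices are the
Ferrers boards with `n` columns rook equivalent to `B`; two distinct boards are
adjacent when one is obtained from the other by moving squares out of one column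
into a single other column. -/
def rookEquivGraph {n : ℕ} (B : FerrersBoard n) :
    SimpleGraph {C : FerrersBoard n // RookEquiv C.1 B.1} :=
  SimpleGraph.fromRel fun C D => MovesSquares C.1.1 D.1.1

/-- `entryCount b k` is `v_k`, the number of entries of the root vector of `b`
equal to `k`. -/
def entryCount {n : ℕ} (b : Fin n → ℕ) (k : ℕ) : ℕ :=
  (Finset.univ.filter fun l => rootVec b l = (k : ℤ)).card

open Finset

attribute [local instance] Classical.propDecidable

/-- Finset of rook placements of `k` rooks. -/
noncomputable def plF {n : ℕ} (b : Fin n → ℕ) (k : ℕ) : Finset (Finset (Fin n × ℕ)) :=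
  (Finset.univ ×ˢ Finset.range (Finset.univ.sup b)).powerset.filter
    fun P => IsRookPlacement b P ∧ P.card = k

lemma mem_plF {n : ℕ} {b : Fin n → ℕ} {k : ℕ} {P : Finset (Fin n × ℕ)} :
    P ∈ plF b k ↔ IsRookPlacement b P ∧ P.card = k := by
  constructor
  · intro h
    exact (Finset.mem_filter.1 h).2
  · intro h
    refine Finset.mem_filter.2 ⟨Finset.mem_powerset.2 ?_, h⟩
    intro c hc
    refine Finset.mem_product.2 ⟨Finset.mem_univ _, Finset.mem_range.2 ?_⟩
    exact lt_of_lt_of_le (h.1.1 c hc) (Finset.le_sup (Finset.mem_univ _))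

lemma rookNum_eq_plF {n : ℕ} (b : Fin n → ℕ) (k : ℕ) :
    rookNum b k = (plF b k).card := by
  rw [rookNum, ← Set.ncard_coe_finset]
  congr 1
  ext P
  simp only [Set.mem_setOf_eq, Finset.coe_sort_coe, Finset.mem_coe, mem_plF]

lemma isRookPlacement_empty {n : ℕ} (b : Fin n → ℕ) : IsRookPlacement b (∅ : Finset (Fin n × ℕ)) :=
  ⟨fun c hc => absurd hc (Finset.notMem_empty c), fun c hc => absurd hc (Finset.notMem_empty c)⟩

lemma rookNum_zero {n : ℕ} (b : Fin n → ℕ) : rookNum b 0 = 1 := by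
  rw [rookNum_eq_plF]
  have : plF b 0 = {∅} := by
    ext P
    simp only [mem_plF, Finset.card_eq_zero, Finset.mem_singleton]
    constructor
    · exact fun h => h.2
    · rintro rfl
      exact ⟨isRookPlacement_empty b, rfl⟩
  rw [this, Finset.card_singleton]

lemma plF_rows_injOn {n : ℕ} {b : Fin n → ℕ} {P : Finset (Fin n × ℕ)}
    (hP : IsRookPlacement b P) : Set.InjOn Prod.snd (P : Set (Fin n × ℕ)) := by
  intro c hc d hd hcd
  by_contra hne
  exact (hP.2 c hc d hd hne).2 hcd

lemma plF_cols_injOn {n : ℕ} {b : Fin n → ℕ} {P : Finset (Fin n × ℕ)}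
    (hP : IsRookPlacement b P) : Set.InjOn Prod.fst (P : Set (Fin n × ℕ)) := by
  intro c hc d hd hcd
  by_contra hne
  exact (hP.2 c hc d hd hne).1 hcd

lemma rookNum_eq_zero_of_cols {n : ℕ} (b : Fin n → ℕ) {k : ℕ} (hk : n < k) :
    rookNum b k = 0 := by
  rw [rookNum_eq_plF, Finset.card_eq_zero]
  rw [Finset.eq_empty_iff_forall_notMem]
  intro P hP
  rw [mem_plF] at hP
  have h1 : (P.image Prod.fst).card = P.card :=
    Finset.card_image_of_injOn (plF_cols_injOn hP.1)
  have h2 : (P.image Prod.fst).card ≤ n := by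
    simpa using Finset.card_le_card (Finset.subset_univ (P.image Prod.fst))
  omega

lemma rookNum_eq_zero_of_rows {n : ℕ} (b : Fin n → ℕ) {H k : ℕ} (hb : ∀ i, b i ≤ H)
    (hk : H < k) : rookNum b k = 0 := by
  rw [rookNum_eq_plF, Finset.card_eq_zero]
  rw [Finset.eq_empty_iff_forall_notMem]
  intro P hP
  rw [mem_plF] at hP
  have h1 : (P.image Prod.snd).card = P.card :=
    Finset.card_image_of_injOn (plF_rows_injOn hP.1)
  have h2 : (P.image Prod.snd) ⊆ Finset.range H := by
    intro r hr
    obtain ⟨c, hc, rfl⟩ := Finset.mem_image.1 hr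
    exact Finset.mem_range.2 (lt_of_lt_of_le (hP.1.1 c hc) (hb c.1))
  have := Finset.card_le_card h2
  simp only [Finset.card_range] at this
  omega

lemma isRookPlacement_subset {n : ℕ} {b : Fin n → ℕ} {P Q : Finset (Fin n × ℕ)}
    (hQ : Q ⊆ P) (hP : IsRookPlacement b P) : IsRookPlacement b Q :=
  ⟨fun c hc => hP.1 c (hQ hc), fun c hc d hd hne => hP.2 c (hQ hc) d (hQ hd) hne⟩

section Rec

variable {n : ℕ}

private def emb : Fin n × ℕ → Fin (n + 1) × ℕ := fun c => (Fin.castSucc c.1, c.2)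

private lemma embInj : Function.Injective (emb (n := n)) := by
  rintro ⟨i, r⟩ ⟨j, s⟩ hyp
  simp only [emb, Prod.mk.injEq, Fin.castSucc_inj] at hyp
  simp [hyp.1, hyp.2]

private lemma placement_image {b : Fin (n+1) → ℕ} {P' : Finset (Fin n × ℕ)}
    (hP' : IsRookPlacement (b ∘ Fin.castSucc) P') : IsRookPlacement b (P'.image emb) := by
  constructor
  · intro c hc
    obtain ⟨d, hd, rfl⟩ := Finset.mem_image.1 hc
    exact hP'.1 d hd
  · intro c hc d hd hne
    obtain ⟨c', hc', rfl⟩ := Finset.mem_image.1 hc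
    obtain ⟨d', hd', rfl⟩ := Finset.mem_image.1 hd
    have hne' : c' ≠ d' := fun hyp => hne (by rw [hyp])
    obtain ⟨h1, h2⟩ := hP'.2 c' hc' d' hd' hne'
    exact ⟨by simpa [emb, Fin.castSucc_inj] using h1, h2⟩

private lemma placement_preimage {b : Fin (n+1) → ℕ} {P : Finset (Fin (n+1) × ℕ)}
    (hP : IsRookPlacement b P) (hnl : ∀ c ∈ P, c.1 ≠ Fin.last n) :
    IsRookPlacement (b ∘ Fin.castSucc) (P.preimage emb embInj.injOn) ∧
      (P.preimage emb embInj.injOn).image emb = P := by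
  have himg : (P.preimage emb embInj.injOn).image emb = P := by
    rw [Finset.image_preimage]
    apply Finset.filter_true_of_mem
    intro c hc
    obtain ⟨j, hj⟩ := Fin.exists_castSucc_eq.2 (hnl c hc)
    exact ⟨(j, c.2), by simp [emb, hj]⟩
  refine ⟨⟨?_, ?_⟩, himg⟩
  · intro c hc
    have := hP.1 (emb c) (Finset.mem_preimage.1 hc)
    simpa [emb] using this
  · intro c hc d hd hne
    have hne' : emb c ≠ emb d := fun hyp => hne (embInj hyp)
    obtain ⟨h1, h2⟩ := hP.2 (emb c) (Finset.mem_preimage.1 hc) (emb d)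
      (Finset.mem_preimage.1 hd) hne'
    refine ⟨fun hyp => h1 ?_, h2⟩
    simp [emb, hyp]

private lemma card_preimage_emb {P : Finset (Fin (n+1) × ℕ)}
    (himg : (P.preimage emb embInj.injOn).image emb = P) :
    (P.preimage emb embInj.injOn).card = P.card := by
  conv_rhs => rw [← himg]
  rw [Finset.card_image_of_injective _ embInj]

theorem plF_succ_card (b : Fin (n+1) → ℕ) (hb : Monotone b) (k : ℕ) :
    (plF b (k+1)).card
      = (plF (b ∘ Fin.castSucc) (k+1)).card
        + (b (Fin.last n) - k) * (plF (b ∘ Fin.castSucc) k).card := by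
  set b' := b ∘ Fin.castSucc with hb'def
  set hh := b (Fin.last n) with hhdef
  have hb'le : ∀ i : Fin n, b' i ≤ hh := by
    intro i
    exact hb (le_of_lt (Fin.castSucc_lt_last i))
  have hsplit := Finset.card_filter_add_card_filter_not
    (s := plF b (k+1)) (p := fun P => ∃ c ∈ P, c.1 = Fin.last n)
  -- part A : no rook in the last column
  have hA : (plF b' (k+1)).card
      = ((plF b (k+1)).filter (fun P => ¬ ∃ c ∈ P, c.1 = Fin.last n)).card := by
    apply Finset.card_bij (i := fun P' _ => P'.image emb)
    · intro P' hP'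
      rw [mem_plF] at hP'
      refine Finset.mem_filter.2 ⟨mem_plF.2 ⟨placement_image hP'.1, ?_⟩, ?_⟩
      · rw [Finset.card_image_of_injective _ embInj]; exact hP'.2
      · rintro ⟨c, hc, hcl⟩
        obtain ⟨d, _, rfl⟩ := Finset.mem_image.1 hc
        exact absurd hcl (Fin.ne_last_of_lt (Fin.castSucc_lt_last d.1))
    · intro P1 h1 P2 h2 hi
      exact Finset.image_injective embInj hi
    · intro P hP
      obtain ⟨hP1, hP2⟩ := Finset.mem_filter.1 hP
      rw [mem_plF] at hP1
      have hnl : ∀ c ∈ P, c.1 ≠ Fin.last n := fun c hc hcl => hP2 ⟨c, hc, hcl⟩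
      obtain ⟨hpl, himg⟩ := placement_preimage hP1.1 hnl
      refine ⟨P.preimage emb embInj.injOn, ?_, himg⟩
      rw [mem_plF]
      exact ⟨hpl, by rw [card_preimage_emb himg]; exact hP1.2⟩
  -- part B : a rook in the last column
  have hBcard : ∀ P' ∈ plF b' k, (Finset.range hh \ P'.image Prod.snd).card = hh - k := by
    intro P' hP'
    rw [mem_plF] at hP'
    have hsub : P'.image Prod.snd ⊆ Finset.range hh := by
      intro r hr
      obtain ⟨c, hc, rfl⟩ := Finset.mem_image.1 hr
      exact Finset.mem_range.2 (lt_of_lt_of_le (hP'.1.1 c hc) (hb'le c.1))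
    have hcardim : (P'.image Prod.snd).card = k := by
      rw [Finset.card_image_of_injOn, hP'.2]
      intro c hc d hd hcd
      by_contra hne
      exact (hP'.1.2 c hc d hd hne).2 hcd
    rw [Finset.card_sdiff_of_subset hsub, hcardim, Finset.card_range]
  have hB : ((plF b' k).sigma (fun P' => Finset.range hh \ P'.image Prod.snd)).card
      = ((plF b (k+1)).filter (fun P => ∃ c ∈ P, c.1 = Fin.last n)).card := by
    apply Finset.card_bij
      (i := fun x _ => insert (Fin.last n, x.2) (x.1.image emb))
    · rintro ⟨P', r⟩ hx
      obtain ⟨hP', hr⟩ := Finset.mem_sigma.1 hx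
      rw [mem_plF] at hP'
      obtain ⟨hrlt, hrnot⟩ := Finset.mem_sdiff.1 hr
      have hnotmem : (Fin.last n, r) ∉ P'.image emb := by
        intro hmem
        obtain ⟨d, _, hd⟩ := Finset.mem_image.1 hmem
        have : (emb d).1 = Fin.last n := by rw [hd]
        exact absurd this (Fin.ne_last_of_lt (Fin.castSucc_lt_last d.1))
      refine Finset.mem_filter.2 ⟨mem_plF.2 ⟨⟨?_, ?_⟩, ?_⟩, ?_⟩
      · intro c hc
        rcases Finset.mem_insert.1 hc with rfl | hc'
        · simpa [← hhdef] using Finset.mem_range.1 hrlt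
        · exact (placement_image hP'.1).1 c hc'
      · intro c hc d hd hne
        rcases Finset.mem_insert.1 hc with rfl | hc' <;>
          rcases Finset.mem_insert.1 hd with rfl | hd'
        · exact absurd rfl hne
        · obtain ⟨d', hd'', rfl⟩ := Finset.mem_image.1 hd'
          constructor
          · exact fun hyp => absurd hyp.symm (Fin.ne_last_of_lt (Fin.castSucc_lt_last d'.1))
          · intro hyp
            exact hrnot (Finset.mem_image.2 ⟨d', hd'', by simpa [emb] using hyp.symm⟩)
        · obtain ⟨c', hc'', rfl⟩ := Finset.mem_image.1 hc'
          constructor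
          · exact fun hyp => absurd hyp (Fin.ne_last_of_lt (Fin.castSucc_lt_last c'.1))
          · intro hyp
            exact hrnot (Finset.mem_image.2 ⟨c', hc'', by simpa [emb] using hyp⟩)
        · exact (placement_image hP'.1).2 c hc' d hd' hne
      · rw [Finset.card_insert_of_notMem hnotmem,
          Finset.card_image_of_injective _ embInj, hP'.2]
      · exact ⟨(Fin.last n, r), Finset.mem_insert_self _ _, rfl⟩
    · rintro ⟨P1, r1⟩ h1 ⟨P2, r2⟩ h2 hi
      simp only at hi
      have hnotim : ∀ (Q : Finset (Fin n × ℕ)) (r : ℕ), (Fin.last n, r) ∉ Q.image emb := by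
        intro Q r hmem
        obtain ⟨d, _, hd⟩ := Finset.mem_image.1 hmem
        have : (emb d).1 = Fin.last n := by rw [hd]
        exact absurd this (Fin.ne_last_of_lt (Fin.castSucc_lt_last d.1))
      have hr : r1 = r2 := by
        have : (Fin.last n, r1) ∈ insert (Fin.last n, r2) (P2.image emb) := by
          rw [← hi]; exact Finset.mem_insert_self _ _
        rcases Finset.mem_insert.1 this with hyp | hyp
        · exact congrArg Prod.snd hyp
        · exact absurd hyp (hnotim P2 r1)
      subst hr
      have him : P1.image emb = P2.image emb := by
        ext c
        constructor
        · intro hc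
          have : c ∈ insert (Fin.last n, r1) (P2.image emb) := by
            rw [← hi]; exact Finset.mem_insert_of_mem hc
          rcases Finset.mem_insert.1 this with rfl | hyp
          · exact absurd hc (hnotim P1 _)
          · exact hyp
        · intro hc
          have : c ∈ insert (Fin.last n, r1) (P1.image emb) := by
            rw [hi]; exact Finset.mem_insert_of_mem hc
          rcases Finset.mem_insert.1 this with rfl | hyp
          · exact absurd hc (hnotim P2 _)
          · exact hyp
      have : P1 = P2 := Finset.image_injective embInj him
      simp [this]
    · intro P hP
      obtain ⟨hP1, hP2⟩ := Finset.mem_filter.1 hP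
      rw [mem_plF] at hP1
      obtain ⟨c0, hc0, hc0l⟩ := hP2
      have hc0eq : c0 = (Fin.last n, c0.2) := by
        rw [← hc0l]
      set Q := P.erase c0 with hQdef
      have hQsub : Q ⊆ P := Finset.erase_subset _ _
      have hQpl : IsRookPlacement b Q := isRookPlacement_subset hQsub hP1.1
      have hQnl : ∀ c ∈ Q, c.1 ≠ Fin.last n := by
        intro c hc hcl
        have hcP := hQsub hc
        have hcne : c ≠ c0 := Finset.ne_of_mem_erase hc
        exact (hP1.1.2 c hcP c0 hc0 hcne).1 (by rw [hcl, hc0l])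
      obtain ⟨hpl, himg⟩ := placement_preimage hQpl hQnl
      refine ⟨⟨Q.preimage emb embInj.injOn, c0.2⟩, ?_, ?_⟩
      · refine Finset.mem_sigma.2 ⟨mem_plF.2 ⟨hpl, ?_⟩, ?_⟩
        · rw [card_preimage_emb himg, hQdef, Finset.card_erase_of_mem hc0, hP1.2]
          omega
        · refine Finset.mem_sdiff.2 ⟨Finset.mem_range.2 ?_, ?_⟩
          · have := hP1.1.1 c0 hc0
            rwa [hc0l] at this
          · intro hmem
            obtain ⟨d, hd, hd2⟩ := Finset.mem_image.1 hmem
            have hdQ : emb d ∈ Q := by rw [← himg]; exact Finset.mem_image_of_mem _ hd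
            have hdne : emb d ≠ c0 := by
              intro hyp
              have : (emb d).1 = Fin.last n := by rw [hyp, hc0l]
              exact absurd this (Fin.ne_last_of_lt (Fin.castSucc_lt_last d.1))
            exact (hP1.1.2 (emb d) (hQsub hdQ) c0 hc0 hdne).2 hd2
      · simp only
        rw [himg, ← hc0eq, hQdef, Finset.insert_erase hc0]
  rw [← hsplit, ← hA, ← hB, Finset.card_sigma]
  rw [Finset.sum_congr rfl hBcard, Finset.sum_const, smul_eq_mul]
  ring

end Rec
section Poly

open Polynomial

noncomputable def rookPoly {n : ℕ} (b : Fin n → ℕ) : Polynomial ℚ :=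
  ∑ k ∈ Finset.range (n+1), Polynomial.C (rookNum b k : ℚ) * descPochhammer ℚ (n - k)

lemma rookNum_succ {n : ℕ} (b : Fin (n+1) → ℕ) (hb : Monotone b) (k : ℕ) :
    rookNum b (k+1) = rookNum (b ∘ Fin.castSucc) (k+1)
      + (b (Fin.last n) - k) * rookNum (b ∘ Fin.castSucc) k := by
  rw [rookNum_eq_plF, rookNum_eq_plF, rookNum_eq_plF]
  exact plF_succ_card b hb k

lemma monotone_castSucc {n : ℕ} {b : Fin (n+1) → ℕ} (hb : Monotone b) :
    Monotone (b ∘ Fin.castSucc) := by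
  intro i j hij
  exact hb (by simpa [Fin.castSucc_le_castSucc_iff] using hij)

lemma rookPoly_eq_prod {n : ℕ} (b : Fin n → ℕ) (hb : Monotone b) :
    rookPoly b = ∏ i : Fin n, (Polynomial.X + Polynomial.C ((b i : ℚ) - ((i : ℕ) : ℚ))) := by
  induction n with
  | zero =>
      simp [rookPoly, rookNum_zero]
  | succ n IH =>
      set b' := b ∘ Fin.castSucc with hb'def
      have hb' : Monotone b' := monotone_castSucc hb
      have hrows : ∀ i : Fin n, b' i ≤ b (Fin.last n) :=
        fun i => hb (le_of_lt (Fin.castSucc_lt_last i))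
      have hvan1 : rookNum b' (n+1) = 0 := rookNum_eq_zero_of_cols b' (lt_add_one n)
      have hvan2 : ∀ k, b (Fin.last n) < k → rookNum b' k = 0 :=
        fun k hk => rookNum_eq_zero_of_rows b' hrows hk
      have hrec : ∀ k : ℕ, (rookNum b (k+1) : ℚ)
          = (rookNum b' (k+1) : ℚ)
            + ((b (Fin.last n) : ℚ) - (k : ℚ)) * (rookNum b' k : ℚ) := by
        intro k
        rw [rookNum_succ b hb k]
        by_cases hk : k ≤ b (Fin.last n)
        · push_cast [Nat.cast_sub hk]
          ring
        · rw [hvan2 k (by omega)]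
          have h0 : b (Fin.last n) - k = 0 := by omega
          rw [h0]
          push_cast
          ring
      have hLHS : rookPoly b
          = descPochhammer ℚ (n+1)
            + ∑ k ∈ Finset.range (n+1),
                Polynomial.C (rookNum b (k+1) : ℚ) * descPochhammer ℚ (n - k) := by
        rw [rookPoly, Finset.sum_range_succ']
        simp only [Nat.succ_sub_succ_eq_sub, Nat.sub_zero, rookNum_zero, Nat.cast_one, map_one,
          one_mul]
        exact add_comm _ _
      have haux : ∑ k ∈ Finset.range (n+1),
            Polynomial.C (rookNum b' k : ℚ) * descPochhammer ℚ (n + 1 - k)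
          = descPochhammer ℚ (n+1)
            + ∑ k ∈ Finset.range (n+1),
                Polynomial.C (rookNum b' (k+1) : ℚ) * descPochhammer ℚ (n - k) := by
        have hext : ∑ k ∈ Finset.range (n+1),
              Polynomial.C (rookNum b' k : ℚ) * descPochhammer ℚ (n + 1 - k)
            = ∑ k ∈ Finset.range (n+2),
              Polynomial.C (rookNum b' k : ℚ) * descPochhammer ℚ (n + 1 - k) := by
          rw [Finset.sum_range_succ (n := n+1), hvan1]
          simp
        rw [hext, Finset.sum_range_succ']
        simp only [Nat.succ_sub_succ_eq_sub, Nat.sub_zero, rookNum_zero, Nat.cast_one, map_one,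
          one_mul]
        exact add_comm _ _
      have hterm : ∀ k ∈ Finset.range (n+1),
          Polynomial.C (rookNum b' k : ℚ) * descPochhammer ℚ (n - k)
            * (Polynomial.X + Polynomial.C ((b (Fin.last n) : ℚ) - (n : ℚ)))
          = Polynomial.C (rookNum b' k : ℚ) * descPochhammer ℚ (n + 1 - k)
            + Polynomial.C (((b (Fin.last n) : ℚ) - (k : ℚ)) * (rookNum b' k : ℚ))
              * descPochhammer ℚ (n - k) := by
        intro k hk
        have hkn : k ≤ n := by simpa [Nat.lt_succ_iff] using Finset.mem_range.1 hk
        have hsub : ((n - k : ℕ) : ℚ) = (n : ℚ) - (k : ℚ) := by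
          push_cast [Nat.cast_sub hkn]; ring
        have hdesc : descPochhammer ℚ (n + 1 - k)
            = descPochhammer ℚ (n - k) * (Polynomial.X - Polynomial.C ((n : ℚ) - (k : ℚ))) := by
          have hidx : n + 1 - k = (n - k) + 1 := by omega
          rw [hidx, descPochhammer_succ_right]
          congr 1
          rw [← hsub]
          simp [Polynomial.C_eq_natCast]
        rw [hdesc]
        simp only [Polynomial.C_sub, Polynomial.C_mul]
        ring
      have hprod' : (∏ i : Fin n,
            (Polynomial.X + Polynomial.C ((b i.castSucc : ℚ) - ((i.castSucc : ℕ) : ℚ))))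
          = rookPoly b' := by
        rw [IH b' hb']
        apply Finset.prod_congr rfl
        intro i _
        simp [hb'def]
      calc rookPoly b
          = descPochhammer ℚ (n+1)
            + ∑ k ∈ Finset.range (n+1),
                Polynomial.C (rookNum b (k+1) : ℚ) * descPochhammer ℚ (n - k) := hLHS
        _ = descPochhammer ℚ (n+1)
            + ∑ k ∈ Finset.range (n+1),
                (Polynomial.C (rookNum b' (k+1) : ℚ) * descPochhammer ℚ (n - k)
                  + Polynomial.C (((b (Fin.last n) : ℚ) - (k : ℚ)) * (rookNum b' k : ℚ))
                      * descPochhammer ℚ (n - k)) := by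
              congr 1
              apply Finset.sum_congr rfl
              intro k _
              rw [hrec k]
              simp only [Polynomial.C_add, Polynomial.C_mul]
              ring
        _ = (descPochhammer ℚ (n+1)
              + ∑ k ∈ Finset.range (n+1),
                  Polynomial.C (rookNum b' (k+1) : ℚ) * descPochhammer ℚ (n - k))
            + ∑ k ∈ Finset.range (n+1),
                Polynomial.C (((b (Fin.last n) : ℚ) - (k : ℚ)) * (rookNum b' k : ℚ))
                  * descPochhammer ℚ (n - k) := by
              rw [Finset.sum_add_distrib]
              ring
        _ = ∑ k ∈ Finset.range (n+1),
              Polynomial.C (rookNum b' k : ℚ) * descPochhammer ℚ (n + 1 - k)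
            + ∑ k ∈ Finset.range (n+1),
                Polynomial.C (((b (Fin.last n) : ℚ) - (k : ℚ)) * (rookNum b' k : ℚ))
                  * descPochhammer ℚ (n - k) := by rw [haux]
        _ = ∑ k ∈ Finset.range (n+1),
              (Polynomial.C (rookNum b' k : ℚ) * descPochhammer ℚ (n - k)
                * (Polynomial.X + Polynomial.C ((b (Fin.last n) : ℚ) - (n : ℚ)))) := by
              rw [← Finset.sum_add_distrib]
              apply Finset.sum_congr rfl
              intro k hk
              rw [hterm k hk]
        _ = (∑ k ∈ Finset.range (n+1),
              Polynomial.C (rookNum b' k : ℚ) * descPochhammer ℚ (n - k))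
            * (Polynomial.X + Polynomial.C ((b (Fin.last n) : ℚ) - (n : ℚ))) := by
              rw [Finset.sum_mul]
        _ = ∏ i : Fin (n+1), (Polynomial.X + Polynomial.C ((b i : ℚ) - ((i : ℕ) : ℚ))) := by
              rw [Fin.prod_univ_castSucc, hprod']
              rw [rookPoly]
              simp [Fin.val_last]

end Poly
section Extract

open Polynomial

lemma descsum_zero : ∀ (N : ℕ) (c : ℕ → ℚ),
    (∑ m ∈ Finset.range (N+1), Polynomial.C (c m) * descPochhammer ℚ m) = 0 →
    ∀ m ≤ N, c m = 0 := by
  intro N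
  induction N with
  | zero =>
      intro c h m hm
      interval_cases m
      simpa using h
  | succ N IH =>
      intro c h m hm
      have hcN : c (N+1) = 0 := by
        have hco := congrArg (fun p => Polynomial.coeff p (N+1)) h
        simp only [Polynomial.finset_sum_coeff, Polynomial.coeff_zero] at hco
        rw [Finset.sum_eq_single (N+1)] at hco
        · rw [Polynomial.coeff_C_mul] at hco
          have hmonic : (descPochhammer ℚ (N+1)).Monic := monic_descPochhammer ℚ (N+1)
          have hdeg : (descPochhammer ℚ (N+1)).natDegree = N+1 := by simp
          have hone := hmonic.coeff_natDegree
          rw [hdeg] at hone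
          rw [hone, mul_one] at hco
          exact hco
        · intro m' hm' hne
          have hm'le : m' ≤ N := by
            have := Finset.mem_range.1 hm'
            omega
          rw [Polynomial.coeff_C_mul,
            Polynomial.coeff_eq_zero_of_natDegree_lt (by simp; omega), mul_zero]
        · intro hne
          exact absurd (Finset.self_mem_range_succ (N+1)) hne
      rcases Nat.lt_succ_iff_lt_or_eq.1 (Nat.lt_succ_of_le hm) with hm' | hm'
      · apply IH c _ m (by omega)
        have := h
        rw [Finset.sum_range_succ, hcN] at this
        simpa using this
      · rw [hm']
        exact hcN
  

theorem rookEquiv_of_rootVec_multiset {n : ℕ} (b₁ b₂ : Fin n → ℕ)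
    (h₁ : Monotone b₁) (h₂ : Monotone b₂)
    (hms : Multiset.map (fun i => (b₁ i : ℤ) - ((i : ℕ) : ℤ)) Finset.univ.val
         = Multiset.map (fun i => (b₂ i : ℤ) - ((i : ℕ) : ℤ)) Finset.univ.val) :
    RookEquiv b₁ b₂ := by
  have hprod : ∀ b : Fin n → ℕ,
      ∏ i : Fin n, (Polynomial.X + Polynomial.C ((b i : ℚ) - ((i : ℕ) : ℚ)))
      = ((Multiset.map (fun i => (b i : ℤ) - ((i : ℕ) : ℤ)) Finset.univ.val).map
          (fun z : ℤ => Polynomial.X + Polynomial.C (z : ℚ))).prod := by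
    intro b
    rw [Multiset.map_map]
    rw [Finset.prod_eq_multiset_prod]
    congr 1
    apply Multiset.map_congr rfl
    intro i _
    simp only [Function.comp_apply]
    push_cast
    ring
  have hpoly : rookPoly b₁ = rookPoly b₂ := by
    rw [rookPoly_eq_prod b₁ h₁, rookPoly_eq_prod b₂ h₂, hprod b₁, hprod b₂, hms]
  -- extract
  have hdiff : ∑ m ∈ Finset.range (n+1),
      Polynomial.C ((rookNum b₁ (n-m) : ℚ) - (rookNum b₂ (n-m) : ℚ)) * descPochhammer ℚ m = 0 := by
    have h1 : ∑ m ∈ Finset.range (n+1),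
        Polynomial.C ((rookNum b₁ (n-m) : ℚ) - (rookNum b₂ (n-m) : ℚ)) * descPochhammer ℚ m
        = ∑ k ∈ Finset.range (n+1),
            Polynomial.C ((rookNum b₁ k : ℚ) - (rookNum b₂ k : ℚ)) * descPochhammer ℚ (n - k) := by
      rw [← Finset.sum_range_reflect]
      apply Finset.sum_congr rfl
      intro k hk
      have hkn : k ≤ n := by
        have := Finset.mem_range.1 hk
        omega
      have h11 : n + 1 - 1 - k = n - k := by omega
      have hnn : n - (n - k) = k := by omega
      rw [h11, hnn]
    rw [h1]
    have h2 : ∀ k ∈ Finset.range (n+1),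
        Polynomial.C ((rookNum b₁ k : ℚ) - (rookNum b₂ k : ℚ)) * descPochhammer ℚ (n - k)
        = Polynomial.C (rookNum b₁ k : ℚ) * descPochhammer ℚ (n - k)
          - Polynomial.C (rookNum b₂ k : ℚ) * descPochhammer ℚ (n - k) := by
      intro k _
      rw [Polynomial.C_sub]
      ring
    rw [Finset.sum_congr rfl h2, Finset.sum_sub_distrib]
    rw [← rookPoly, ← rookPoly, hpoly]
    ring
  intro k
  by_cases hk : k ≤ n
  · have := descsum_zero n _ hdiff (n - k) (Nat.sub_le n k)
    have hnk : n - (n - k) = k := by omega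
    rw [hnk] at this
    have : (rookNum b₁ k : ℚ) = (rookNum b₂ k : ℚ) := by linarith [this]
    exact_mod_cast this
  · rw [rookNum_eq_zero_of_cols b₁ (by omega), rookNum_eq_zero_of_cols b₂ (by omega)]

end Extract
section Comb

def cntY {n : ℕ} (y : Fin n → ℕ) (c : ℕ) : ℕ :=
  (Finset.univ.filter fun i => y i = c).card

def ValidY {n : ℕ} (y : Fin n → ℕ) : Prop :=
  (∀ i : Fin n, y i ≤ (i : ℕ)) ∧ ∀ i j : Fin n, i ≤ j → y j + (i : ℕ) ≤ y i + (j : ℕ)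

def SwapStepY {n : ℕ} (y y' : Fin n → ℕ) : Prop :=
  ∃ p q : Fin n, y p < y q ∧ y' = y ∘ (Equiv.swap p q)

def ReachY {n : ℕ} : (Fin n → ℕ) → (Fin n → ℕ) → Prop :=
  Relation.ReflTransGen (fun a b => SwapStepY a b ∧ ValidY b)

lemma validY_of_adj {n : ℕ} (y : Fin n → ℕ) (h1 : ∀ i : Fin n, y i ≤ (i : ℕ))
    (h2 : ∀ i j : Fin n, (j : ℕ) = (i : ℕ) + 1 → y j ≤ y i + 1) : ValidY y := by
  refine ⟨h1, ?_⟩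
  have haux : ∀ (d : ℕ) (i j : Fin n), (j : ℕ) = (i : ℕ) + d → y j + (i : ℕ) ≤ y i + (j : ℕ) := by
    intro d
    induction d with
    | zero =>
        intro i j hij
        have : i = j := Fin.ext (by omega)
        subst this
        omega
    | succ d IH =>
        intro i j hij
        have hmlt : (i : ℕ) + d < n := by
          have := j.isLt
          omega
        set m : Fin n := ⟨(i : ℕ) + d, hmlt⟩ with hm
        have hmv : (m : ℕ) = (i : ℕ) + d := rfl
        have h1' := IH i m (by omega)
        have h2' := h2 m j (by omega)
        omega
  intro i j hij
  exact haux ((j : ℕ) - (i : ℕ)) i j (by omega)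

lemma cntY_comp_equiv {n : ℕ} (y : Fin n → ℕ) (e : Equiv.Perm (Fin n)) (c : ℕ) :
    cntY (y ∘ e) c = cntY y c := by
  apply Finset.card_bij (i := fun i _ => e i)
  · intro i hi
    simp only [Finset.mem_filter, Finset.mem_univ, true_and] at hi ⊢
    exact hi
  · intro i _ j _ hij
    exact e.injective hij
  · intro j hj
    simp only [Finset.mem_filter, Finset.mem_univ, true_and] at hj ⊢
    exact ⟨e.symm j, by simpa using hj, by simp⟩

lemma msY_comp_equiv {n : ℕ} (y : Fin n → ℕ) (e : Equiv.Perm (Fin n)) :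
    Multiset.map (y ∘ e) Finset.univ.val = Multiset.map y Finset.univ.val := by
  conv_rhs => rw [← Finset.map_univ_equiv e]
  rw [Finset.map_val, Multiset.map_map]
  rfl

lemma reachY_valid {n : ℕ} {y y' : Fin n → ℕ} (h : ReachY y y') (hv : ValidY y) : ValidY y' := by
  induction h with
  | refl => exact hv
  | tail _ hbc ih => exact hbc.2

lemma reachY_cnt {n : ℕ} {y y' : Fin n → ℕ} (h : ReachY y y') (c : ℕ) : cntY y' c = cntY y c := by
  induction h with
  | refl => rfl
  | tail _ hbc ih =>
      obtain ⟨p, q, _, rfl⟩ := hbc.1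
      rw [cntY_comp_equiv _ _ c, ih]

lemma reachY_bd {n : ℕ} {y y' : Fin n → ℕ} (h : ReachY y y') {M : ℕ} (hb : ∀ i, y i ≤ M) :
    ∀ i, y' i ≤ M := by
  induction h with
  | refl => exact hb
  | tail _ hbc ih =>
      obtain ⟨p, q, _, rfl⟩ := hbc.1
      exact fun i => ih _

lemma reachY_ms {n : ℕ} {y y' : Fin n → ℕ} (h : ReachY y y') :
    Multiset.map y' Finset.univ.val = Multiset.map y Finset.univ.val := by
  induction h with
  | refl => rfl
  | tail _ hbc ih =>
      obtain ⟨p, q, _, rfl⟩ := hbc.1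
      rw [msY_comp_equiv, ih]

lemma parkZero {n : ℕ} (M : ℕ) : ∀ (e : ℕ) (y : Fin (n+1) → ℕ), ValidY y → (∀ i, y i ≤ M) →
    (∀ c, c + 1 ≤ M → 1 < cntY y c) → y (Fin.last n) = e →
    ∃ y', ReachY y y' ∧ y' (Fin.last n) = 0 := by
  intro e
  induction e using Nat.strong_induction_on with
  | _ e IH =>
  intro y hval hbd hdup hlast
  rcases Nat.eq_zero_or_pos e with he | he
  · exact ⟨y, Relation.ReflTransGen.refl, by rw [hlast, he]⟩
  have heM : e ≤ M := hlast ▸ hbd _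
  have hdup' : 1 < cntY y (e-1) := hdup (e-1) (by omega)
  obtain ⟨p1, hp1, p2, hp2, hne⟩ := Finset.one_lt_card.1 hdup'
  simp only [Finset.mem_filter, Finset.mem_univ, true_and] at hp1 hp2
  set p' := min p1 p2 with hp'def
  set p'' := max p1 p2 with hp''def
  have hplt : p' < p'' := min_lt_max.2 hne
  have hyp' : y p' = e - 1 := by
    rcases min_choice p1 p2 with h | h <;> rw [hp'def, h] <;> assumption
  have hyp'' : y p'' = e - 1 := by
    rcases max_choice p1 p2 with h | h <;> rw [hp''def, h] <;> assumption
  have hp''ne : p'' ≠ Fin.last n := by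
    intro hcon
    rw [hcon, hlast] at hyp''
    omega
  have hp''lt : p'' < Fin.last n := lt_of_le_of_ne (Fin.le_last _) hp''ne
  set S := Finset.univ.filter (fun i : Fin (n+1) => p' < i ∧ y i ≤ e - 1) with hS
  have hSne : S.Nonempty := ⟨p'', by simp [hS, hplt]; omega⟩
  set i0 := S.min' hSne with hi0def
  have hi0 : p' < i0 ∧ y i0 ≤ e - 1 := by
    have := S.min'_mem hSne
    simp only [hS, Finset.mem_filter, Finset.mem_univ, true_and] at this
    exact this
  have hi0le : i0 ≤ p'' := S.min'_le p'' (by simp [hS, hplt]; omega)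
  have hi0lt : i0 < Fin.last n := lt_of_le_of_lt hi0le hp''lt
  have hi0ne : i0 ≠ Fin.last n := ne_of_lt hi0lt
  have hi0pos : 0 < (i0 : ℕ) := by
    have : (p' : ℕ) < (i0 : ℕ) := hi0.1
    omega
  have hJlt' : (i0 : ℕ) - 1 < n + 1 := by omega
  set J : Fin (n+1) := ⟨(i0 : ℕ) - 1, hJlt'⟩ with hJ
  have hJlt : J < i0 := by
    rw [Fin.lt_def]
    show (i0 : ℕ) - 1 < (i0 : ℕ)
    omega
  have hJy : e - 1 ≤ y J := by
    have hple : (p' : ℕ) ≤ (J : ℕ) := by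
      have : (p' : ℕ) < (i0 : ℕ) := hi0.1
      simp [hJ]
      omega
    rcases eq_or_lt_of_le hple with hcase | hcase
    · have : p' = J := Fin.ext hcase
      rw [← this, hyp']
    · have hJnot : J ∉ S := fun hmem => absurd (S.min'_le J hmem) (not_le.2 hJlt)
      simp only [hS, Finset.mem_filter, Finset.mem_univ, true_and, not_and, not_le] at hJnot
      have hgt := hJnot (by rw [Fin.lt_def]; exact hcase)
      have hlink1 : (J : ℕ) = (i0 : ℕ) - 1 := rfl
      omega
  have hival : e ≤ (i0 : ℕ) := by
    have hJb := hval.1 J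
    have hlink1 : (J : ℕ) = (i0 : ℕ) - 1 := rfl
    omega
  have hyi0lt : y i0 < e := by omega
  set y2 := y ∘ Equiv.swap i0 (Fin.last n) with hy2
  have hy2i0 : y2 i0 = e := by
    simp only [hy2, Function.comp_apply, Equiv.swap_apply_left]
    exact hlast
  have hy2last : y2 (Fin.last n) = y i0 := by
    simp only [hy2, Function.comp_apply, Equiv.swap_apply_right]
  have hy2other : ∀ i, i ≠ i0 → i ≠ Fin.last n → y2 i = y i := by
    intro i hi1 hi2
    simp only [hy2, Function.comp_apply, Equiv.swap_apply_of_ne_of_ne hi1 hi2]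
  have hstep : SwapStepY y y2 := ⟨i0, Fin.last n, by rw [hlast]; exact hyi0lt, rfl⟩
  have hval2 : ValidY y2 := by
    apply validY_of_adj
    · intro i
      rcases eq_or_ne i i0 with rfl | hi1
      · rw [hy2i0]; exact hival
      · rcases eq_or_ne i (Fin.last n) with rfl | hi2
        · rw [hy2last]
          exact le_trans (hval.1 i0) (by exact_mod_cast Fin.le_last i0)
        · rw [hy2other i hi1 hi2]; exact hval.1 i
    · intro i j hij
      have hijf : i < j := by rw [Fin.lt_def]; omega
      have hine : i ≠ Fin.last n := by
        intro hcon
        have := Fin.le_last j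
        rw [hcon] at hijf
        exact absurd hijf (not_lt.2 (Fin.le_last j))
      have hadj : ∀ a b : Fin (n+1), (b : ℕ) = (a : ℕ) + 1 → y b ≤ y a + 1 := by
        intro a b hab
        have := hval.2 a b (by rw [Fin.le_def]; omega)
        omega
      rcases eq_or_ne j i0 with rfl | hj1
      · -- j = i0, so i = J
        have : i = J := Fin.ext (by simp [hJ]; omega)
        subst this
        rw [hy2i0, hy2other _ (ne_of_lt hJlt) (ne_of_lt (lt_trans hJlt hi0lt))]
        omega
      · rcases eq_or_ne j (Fin.last n) with rfl | hj2
        · rw [hy2last]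
          rcases eq_or_ne i i0 with rfl | hi1
          · rw [hy2i0]; omega
          · rw [hy2other i hi1 hine]
            have h1 := hadj i (Fin.last n) hij
            rw [hlast] at h1
            omega
        · rw [hy2other j hj1 hj2]
          rcases eq_or_ne i i0 with rfl | hi1
          · rw [hy2i0]
            have := hadj i0 j hij
            omega
          · rw [hy2other i hi1 hine]
            exact hadj i j hij
  obtain ⟨y', hreach, hlast'⟩ := IH (y i0) (by omega) y2 hval2
    (fun i => by
      simp only [hy2, Function.comp_apply]
      exact hbd _)
    (fun c hc => by
      rw [hy2, cntY_comp_equiv]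
      exact hdup c hc)
    hy2last
  exact ⟨y', Relation.ReflTransGen.head ⟨hstep, hval2⟩ hreach, hlast'⟩

end Comb
section Main

lemma reach_staircase : ∀ (n : ℕ) (y : Fin n → ℕ) (M : ℕ),
    ValidY y → (∀ i, y i ≤ M) → (∀ c, c ≤ M → ∃ i, y i = c) →
    (∀ c, c + 1 < M → 1 < cntY y c → 1 < cntY y (c+1)) →
    ∃ y', ReachY y y' ∧ ∀ i : Fin n, (i : ℕ) ≤ M → y' i = (i : ℕ) := by
  intro n
  induction n using Nat.strong_induction_on with
  | _ n IHn =>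
  intro y M hval hbd hsurj hcond
  by_cases hM0 : M = 0
  · refine ⟨y, Relation.ReflTransGen.refl, fun i hi => ?_⟩
    have h1 := hval.1 i
    omega
  have hM1 : 1 ≤ M := by omega
  have hnM : M + 1 ≤ n := by
    have hch : ∀ c : Fin (M+1), ∃ i : Fin n, y i = (c : ℕ) :=
      fun c => hsurj c (by omega)
    choose f hf using hch
    have hfinj : Function.Injective f := by
      intro a b hab
      apply Fin.ext
      have : (a : ℕ) = (b : ℕ) := by rw [← hf a, ← hf b, hab]
      exact this
    simpa using Fintype.card_le_of_injective f hfinj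
  by_cases hneq : n = M + 1
  · subst hneq
    refine ⟨y, Relation.ReflTransGen.refl, fun i _ => ?_⟩
    set g : Fin (M+1) → Fin (M+1) := fun i => ⟨y i, by have := hbd i; omega⟩ with hg
    have hgsurj : Function.Surjective g := by
      intro c
      obtain ⟨i, hi⟩ := hsurj (c : ℕ) (by omega)
      exact ⟨i, Fin.ext (by simp [hg, hi])⟩
    have hgbij : Function.Bijective g :=
      (Fintype.bijective_iff_surjective_and_card g).2 ⟨hgsurj, rfl⟩
    have hsum : ∑ j : Fin (M+1), ((g j : ℕ)) = ∑ j : Fin (M+1), (j : ℕ) :=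
      Function.Bijective.sum_comp hgbij _
    have hsum' : ∑ j : Fin (M+1), y j = ∑ j : Fin (M+1), (j : ℕ) := hsum
    have hptwise := (Finset.sum_eq_sum_iff_of_le (fun j (_ : j ∈ Finset.univ) => hval.1 j)).1
      hsum'
    exact hptwise i (Finset.mem_univ i)
  have hngt : M + 1 < n := by omega
  by_cases h01 : cntY y 0 ≤ 1
  · -- exactly one zero : peel the front column
    rcases n with _ | m
    · omega
    have hy0 : y 0 = 0 := by
      have := hval.1 0
      simpa using this
    have hpos : ∀ i : Fin (m+1), i ≠ 0 → 1 ≤ y i := by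
      intro i hi
      by_contra hcon
      push_neg at hcon
      have hyi : y i = 0 := by omega
      have : 1 < cntY y 0 := by
        apply Finset.one_lt_card.2
        exact ⟨0, by simp [hy0], i, by simp [hyi], fun h => hi h.symm⟩
      omega
    set z : Fin m → ℕ := fun i => y i.succ - 1 with hz
    have hsz : ∀ i : Fin m, y i.succ = z i + 1 := by
      intro i
      have := hpos i.succ (Fin.succ_ne_zero i)
      simp only [hz]
      omega
    have hvalz : ValidY z := by
      constructor
      · intro i
        have h1 := hval.1 i.succ
        have hv : (i.succ : ℕ) = (i : ℕ) + 1 := Fin.val_succ i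
        have h2 := hsz i
        omega
      · intro i j hij
        have h2 := hval.2 i.succ j.succ (by rwa [Fin.succ_le_succ_iff])
        have hvi : (i.succ : ℕ) = (i : ℕ) + 1 := Fin.val_succ i
        have hvj : (j.succ : ℕ) = (j : ℕ) + 1 := Fin.val_succ j
        have h3 := hsz i
        have h4 := hsz j
        omega
    have hbdz : ∀ i, z i ≤ M - 1 := by
      intro i
      have h1 := hbd i.succ
      have h2 := hsz i
      omega
    have hsurjz : ∀ c, c ≤ M - 1 → ∃ i, z i = c := by
      intro c hc
      obtain ⟨i, hi⟩ := hsurj (c+1) (by omega)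
      have hine : i ≠ 0 := by
        intro hcon
        rw [hcon, hy0] at hi
        omega
      obtain ⟨j, hj⟩ := Fin.exists_succ_eq_of_ne_zero hine
      refine ⟨j, ?_⟩
      have := hsz j
      rw [hj] at this
      omega
    have hcntz : ∀ c, cntY z c = cntY y (c+1) := by
      intro c
      apply Finset.card_bij (i := fun j _ => j.succ)
      · intro j hj
        simp only [Finset.mem_filter, Finset.mem_univ, true_and] at hj ⊢
        have := hsz j
        omega
      · intro a _ b _ hab
        exact Fin.succ_injective m hab
      · intro i hi
        simp only [Finset.mem_filter, Finset.mem_univ, true_and] at hi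
        have hine : i ≠ 0 := by
          intro hcon
          rw [hcon, hy0] at hi
          omega
        obtain ⟨j, hj⟩ := Fin.exists_succ_eq_of_ne_zero hine
        have hzj : z j = c := by
          have := hsz j
          rw [hj] at this
          omega
        exact ⟨j, by simp only [Finset.mem_filter, Finset.mem_univ, true_and]; exact hzj, hj⟩
    have hcondz : ∀ c, c + 1 < M - 1 → 1 < cntY z c → 1 < cntY z (c+1) := by
      intro c hc hcc
      rw [hcntz] at hcc ⊢
      exact hcond (c+1) (by omega) hcc
    obtain ⟨z', hzreach, hzfinal⟩ := IHn m (by omega) z (M-1) hvalz hbdz hsurjz hcondz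
    set L : (Fin m → ℕ) → (Fin (m+1) → ℕ) := fun w => Fin.cons 0 (fun i => w i + 1) with hL
    have hL0 : ∀ w, L w 0 = 0 := fun w => rfl
    have hLs : ∀ w j, L w j.succ = w j + 1 := fun w j => by simp [hL]
    have hLy : L z = y := by
      funext i
      rcases eq_or_ne i 0 with rfl | hne
      · rw [hL0, hy0]
      · obtain ⟨j, hj⟩ := Fin.exists_succ_eq_of_ne_zero hne
        subst hj
        rw [hLs, ← hsz j]
    have hLvalid : ∀ w : Fin m → ℕ, ValidY w → ValidY (L w) := by
      intro w hv
      apply validY_of_adj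
      · intro i
        rcases eq_or_ne i 0 with rfl | hne
        · rw [hL0]
          exact Nat.zero_le _
        · obtain ⟨j, hj⟩ := Fin.exists_succ_eq_of_ne_zero hne
          subst hj
          rw [hLs]
          have := hv.1 j
          have hvj : (j.succ : ℕ) = (j : ℕ) + 1 := Fin.val_succ j
          omega
      · intro i j hij
        have hjne : j ≠ 0 := by
          intro hcon
          rw [hcon] at hij
          simp at hij
        obtain ⟨j', hj'⟩ := Fin.exists_succ_eq_of_ne_zero hjne
        subst hj'
        have hvj : (j'.succ : ℕ) = (j' : ℕ) + 1 := Fin.val_succ j'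
        rcases eq_or_ne i 0 with rfl | hine
        · have hj'0 : (j' : ℕ) = 0 := by
            have hi0 : ((0 : Fin (m+1)) : ℕ) = 0 := rfl
            omega
          rw [hLs, hL0]
          have := hv.1 j'
          omega
        · obtain ⟨i', hi'⟩ := Fin.exists_succ_eq_of_ne_zero hine
          subst hi'
          have hvi : (i'.succ : ℕ) = (i' : ℕ) + 1 := Fin.val_succ i'
          have h2 := hv.2 i' j' (by rw [Fin.le_def]; omega)
          rw [hLs, hLs]
          omega
    have hLstep : ∀ w w' : Fin m → ℕ, SwapStepY w w' → SwapStepY (L w) (L w') := by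
      rintro w w' ⟨p, q, hlt, rfl⟩
      refine ⟨p.succ, q.succ, ?_, ?_⟩
      · rw [hLs, hLs]
        omega
      · funext i
        rcases eq_or_ne i 0 with rfl | hne
        · rw [hL0, Function.comp_apply,
            Equiv.swap_apply_of_ne_of_ne (Fin.succ_ne_zero p).symm (Fin.succ_ne_zero q).symm,
            hL0]
        · obtain ⟨j, hj⟩ := Fin.exists_succ_eq_of_ne_zero hne
          subst hj
          have hsw : Equiv.swap p.succ q.succ j.succ = (Equiv.swap p q j).succ := by
            rcases eq_or_ne j p with rfl | hjp
            · simp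
            · rcases eq_or_ne j q with rfl | hjq
              · simp
              · rw [Equiv.swap_apply_of_ne_of_ne
                  (fun h => hjp (Fin.succ_injective _ h))
                  (fun h => hjq (Fin.succ_injective _ h)),
                  Equiv.swap_apply_of_ne_of_ne hjp hjq]
          rw [Function.comp_apply, hLs, Function.comp_apply, hsw, hLs]
    have hLreachGen : ∀ w w' : Fin m → ℕ, ReachY w w' → ReachY (L w) (L w') := by
      intro w w' hww
      induction hww with
      | refl => exact Relation.ReflTransGen.refl
      | tail hab hbc ih =>
          exact Relation.ReflTransGen.tail ih ⟨hLstep _ _ hbc.1, hLvalid _ hbc.2⟩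
    have hLreach := hLreachGen z z' hzreach
    rw [hLy] at hLreach
    refine ⟨L z', hLreach, ?_⟩
    intro i hi
    rcases eq_or_ne i 0 with rfl | hne
    · rw [hL0]
      rfl
    · obtain ⟨j, hj⟩ := Fin.exists_succ_eq_of_ne_zero hne
      subst hj
      have hvj : (j.succ : ℕ) = (j : ℕ) + 1 := Fin.val_succ j
      rw [hLs, hzfinal j (by omega)]
      omega
  · -- at least two zeros
    have h02 : 1 < cntY y 0 := by
      have : 0 < cntY y 0 := by
        obtain ⟨i, hi⟩ := hsurj 0 (by omega)
        rw [cntY, Finset.card_pos]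
        exact ⟨i, by simp [hi]⟩
      omega
    have hdupchain : ∀ c, c ≤ M - 1 → 1 < cntY y c := by
      intro c
      induction c with
      | zero => intro _; exact h02
      | succ c IHc => intro hc; exact hcond c (by omega) (IHc (by omega))
    rcases n with _ | m
    · omega
    obtain ⟨y2, hr2, hl2⟩ := parkZero M (y (Fin.last m)) y hval hbd
      (fun c hc => hdupchain c (by omega)) rfl
    have hval2 : ValidY y2 := reachY_valid hr2 hval
    have hcnt2 : ∀ c, cntY y2 c = cntY y c := reachY_cnt hr2
    have hbd2 : ∀ i, y2 i ≤ M := reachY_bd hr2 hbd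
    set z : Fin m → ℕ := fun i => y2 i.castSucc with hz
    have hcc : ∀ j : Fin m, ((j.castSucc : Fin (m+1)) : ℕ) = (j : ℕ) := fun j => rfl
    have hvalz : ValidY z := by
      constructor
      · intro i
        have := hval2.1 i.castSucc
        simpa using this
      · intro i j hij
        have := hval2.2 i.castSucc j.castSucc (by rwa [Fin.castSucc_le_castSucc_iff])
        simpa using this
    have hbdz : ∀ i, z i ≤ M := fun i => hbd2 _
    have hcnt_cast : ∀ c, c ≠ 0 → cntY z c = cntY y2 c := by
      intro c hc
      apply Finset.card_bij (i := fun j _ => j.castSucc)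
      · intro j hj
        simpa using hj
      · intro a _ b _ hab
        exact Fin.castSucc_injective m hab
      · intro i hi
        simp only [Finset.mem_filter, Finset.mem_univ, true_and] at hi
        have hine : i ≠ Fin.last m := by
          intro hcon
          rw [hcon, hl2] at hi
          exact hc hi.symm
        obtain ⟨j, hj⟩ := Fin.exists_castSucc_eq.2 hine
        refine ⟨j, ?_, hj⟩
        simp only [Finset.mem_filter, Finset.mem_univ, true_and, hz]
        rw [hj]
        exact hi
    have hsurjz : ∀ c, c ≤ M → ∃ i, z i = c := by
      intro c hc
      rcases Nat.eq_zero_or_pos c with rfl | hcpos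
      · have h2' : 1 < cntY y2 0 := by rw [hcnt2]; exact h02
        obtain ⟨i1, hi1, i2, hi2, hne⟩ := Finset.one_lt_card.1 h2'
        simp only [Finset.mem_filter, Finset.mem_univ, true_and] at hi1 hi2
        rcases eq_or_ne i1 (Fin.last m) with rfl | hne1
        · obtain ⟨j, hj⟩ := Fin.exists_castSucc_eq.2
            (show i2 ≠ Fin.last m from fun h => hne (by rw [h]))
          exact ⟨j, by simp only [hz]; rw [hj]; exact hi2⟩
        · obtain ⟨j, hj⟩ := Fin.exists_castSucc_eq.2 hne1
          exact ⟨j, by simp only [hz]; rw [hj]; exact hi1⟩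
      · obtain ⟨i, hi⟩ := hsurj c hc
        have hpos' : 0 < cntY y2 c := by
          rw [hcnt2, cntY, Finset.card_pos]
          exact ⟨i, by simp [hi]⟩
        rw [cntY, Finset.card_pos] at hpos'
        obtain ⟨i2, hi2⟩ := hpos'
        simp only [Finset.mem_filter, Finset.mem_univ, true_and] at hi2
        have hne1 : i2 ≠ Fin.last m := by
          intro hcon
          rw [hcon, hl2] at hi2
          omega
        obtain ⟨j, hj⟩ := Fin.exists_castSucc_eq.2 hne1
        exact ⟨j, by simp only [hz]; rw [hj]; exact hi2⟩
    have hcondz : ∀ c, c + 1 < M → 1 < cntY z c → 1 < cntY z (c+1) := by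
      intro c hc _
      rw [hcnt_cast (c+1) (by omega), hcnt2]
      exact hdupchain (c+1) (by omega)
    obtain ⟨z', hzreach, hzfinal⟩ := IHn m (by omega) z M hvalz hbdz hsurjz hcondz
    set L : (Fin m → ℕ) → (Fin (m+1) → ℕ) := fun w => Fin.snoc w 0 with hL
    have hLc : ∀ w (j : Fin m), L w j.castSucc = w j := fun w j => by simp [hL]
    have hLl : ∀ w, L w (Fin.last m) = 0 := fun w => by simp [hL]
    have hLy2 : L z = y2 := by
      funext i
      rcases Fin.eq_castSucc_or_eq_last i with ⟨j, rfl⟩ | rfl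
      · rw [hLc]
      · rw [hLl, hl2]
    have hLvalid : ∀ w : Fin m → ℕ, ValidY w → ValidY (L w) := by
      intro w hv
      apply validY_of_adj
      · intro i
        rcases Fin.eq_castSucc_or_eq_last i with ⟨j, rfl⟩ | rfl
        · rw [hLc]
          have := hv.1 j
          have := hcc j
          omega
        · rw [hLl]
          omega
      · intro i j hij
        rcases Fin.eq_castSucc_or_eq_last j with ⟨j', rfl⟩ | rfl
        · have hj'c := hcc j'
          rcases Fin.eq_castSucc_or_eq_last i with ⟨i', rfl⟩ | rfl
          · have hi'c := hcc i'
            rw [hLc, hLc]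
            have h2 := hv.2 i' j' (by rw [Fin.le_def]; omega)
            omega
          · have : (Fin.last m : ℕ) = m := rfl
            have := j'.isLt
            omega
        · rw [hLl]
          omega
    have hLstep : ∀ w w' : Fin m → ℕ, SwapStepY w w' → SwapStepY (L w) (L w') := by
      rintro w w' ⟨p, q, hlt, rfl⟩
      refine ⟨p.castSucc, q.castSucc, ?_, ?_⟩
      · rw [hLc, hLc]
        omega
      · funext i
        rcases Fin.eq_castSucc_or_eq_last i with ⟨j, rfl⟩ | rfl
        · have hsw : Equiv.swap p.castSucc q.castSucc j.castSucc
              = (Equiv.swap p q j).castSucc := by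
            rcases eq_or_ne j p with rfl | hjp
            · simp
            · rcases eq_or_ne j q with rfl | hjq
              · simp
              · rw [Equiv.swap_apply_of_ne_of_ne
                  (fun h => hjp (Fin.castSucc_injective _ h))
                  (fun h => hjq (Fin.castSucc_injective _ h)),
                  Equiv.swap_apply_of_ne_of_ne hjp hjq]
          rw [Function.comp_apply, hLc, Function.comp_apply, hsw, hLc]
        · rw [Function.comp_apply,
            Equiv.swap_apply_of_ne_of_ne
              (Fin.ne_last_of_lt (Fin.castSucc_lt_last p)).symm
              (Fin.ne_last_of_lt (Fin.castSucc_lt_last q)).symm,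
            hLl, hLl]
    have hLreachGen : ∀ w w' : Fin m → ℕ, ReachY w w' → ReachY (L w) (L w') := by
      intro w w' hww
      induction hww with
      | refl => exact Relation.ReflTransGen.refl
      | tail hab hbc ih =>
          exact Relation.ReflTransGen.tail ih ⟨hLstep _ _ hbc.1, hLvalid _ hbc.2⟩
    have hLreach := hLreachGen z z' hzreach
    rw [hLy2] at hLreach
    refine ⟨L z', Relation.ReflTransGen.trans hr2 hLreach, ?_⟩
    intro i hi
    have hiltm : (i : ℕ) < m := by
      have : (i : ℕ) < m + 1 := i.isLt
      omega
    rcases Fin.eq_castSucc_or_eq_last i with ⟨j, rfl⟩ | rfl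
    · have := hcc j
      rw [hLc, hzfinal j (by omega)]
      exact this.symm
    · have : (Fin.last m : ℕ) = m := rfl
      omega

end Main

section Glue

def bdY {n : ℕ} (y : Fin n → ℕ) : Fin n → ℕ := fun i => (i : ℕ) - y i

lemma bdY_mono {n : ℕ} {y : Fin n → ℕ} (hv : ValidY y) : Monotone (bdY y) := by
  intro i j hij
  have h1 := hv.1 i
  have h2 := hv.1 j
  have h3 := hv.2 i j hij
  have h4 : (i : ℕ) ≤ (j : ℕ) := hij
  simp only [bdY]
  omega

lemma ms_rootVec_neg {n : ℕ} (w : Fin n → ℕ) (hw : ValidY w) :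
    Multiset.map (fun i => (bdY w i : ℤ) - ((i : ℕ) : ℤ)) Finset.univ.val
      = Multiset.map (fun v : ℕ => -(v : ℤ)) (Multiset.map w Finset.univ.val) := by
  rw [Multiset.map_map]
  apply Multiset.map_congr rfl
  intro i _
  have := hw.1 i
  simp only [Function.comp_apply, bdY]
  omega

lemma moves_of_step {n : ℕ} {y y2 : Fin n → ℕ} (hv : ValidY y) (hv2 : ValidY y2)
    (hs : SwapStepY y y2) : MovesSquares (bdY y) (bdY y2) ∧ bdY y ≠ bdY y2 := by
  obtain ⟨p, q, hlt, rfl⟩ := hs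
  have hpq : p ≠ q := by
    intro h
    rw [h] at hlt
    exact lt_irrefl _ hlt
  have hyp : (y ∘ Equiv.swap p q) p = y q := by simp
  have hyq : (y ∘ Equiv.swap p q) q = y p := by simp
  have hyqp : y q ≤ (p : ℕ) := by
    have := hv2.1 p
    rwa [hyp] at this
  have hypp : y p ≤ (p : ℕ) := hv.1 p
  have hyqq : y q ≤ (q : ℕ) := hv.1 q
  constructor
  · refine ⟨p, q, y q - y p, hpq, by omega, ?_, ?_, ?_⟩
    · show (p : ℕ) - y p = (p : ℕ) - (y ∘ Equiv.swap p q) p + (y q - y p)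
      rw [hyp]
      omega
    · show (q : ℕ) - (y ∘ Equiv.swap p q) q = (q : ℕ) - y q + (y q - y p)
      rw [hyq]
      omega
    · intro l hlp hlq
      show (l : ℕ) - y l = (l : ℕ) - (y ∘ Equiv.swap p q) l
      rw [Function.comp_apply, Equiv.swap_apply_of_ne_of_ne hlp hlq]
  · intro hcon
    have := congrFun hcon p
    simp only [bdY, hyp] at this
    omega

end Glue


/-- if `v_i > 1` implies `v_{i+1} > 1` for all `0 ≤ i < M - 1`, then
`B` is connected by a path in its rook equivalence graph to a board `B'` whose
root vector has first `M + 1` entries `0, 1, …, M` (0-indexed: entry `i` equals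
`i` for all `i ≤ M`). -/
theorem stmt3 {n : ℕ} (B : FerrersBoard n)
    (hpos : ∀ i, 0 ≤ rootVec B.1 i)
    (M : ℕ) (hM : entryCount B.1 M ≠ 0)
    (hMmax : ∀ k, entryCount B.1 k ≠ 0 → k ≤ M)
    (hcond : ∀ i : ℕ, i + 1 < M → 1 < entryCount B.1 i → 1 < entryCount B.1 (i + 1)) :
    ∃ B' : {C : FerrersBoard n // RookEquiv C.1 B.1},
      (rookEquivGraph B).Reachable ⟨B, fun _ => rfl⟩ B' ∧
      ∀ i : Fin n, (i : ℕ) ≤ M → rootVec B'.1.1 i = ((i : ℕ) : ℤ) := by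
  classical
  have hble : ∀ i : Fin n, B.1 i ≤ (i : ℕ) := by
    intro i
    have := hpos i
    simp only [rootVec] at this
    omega
  set y0 : Fin n → ℕ := fun i => (i : ℕ) - B.1 i with hy0def
  have hbdY0 : bdY y0 = B.1 := by
    funext i
    have := hble i
    simp only [bdY, hy0def]
    omega
  have hvalY0 : ValidY y0 := by
    constructor
    · intro i
      simp only [hy0def]
      omega
    · intro i j hij
      have h1 := hble i
      have h2 := hble j
      have h3 : B.1 i ≤ B.1 j := B.2 hij
      have h4 : (i : ℕ) ≤ (j : ℕ) := hij
      simp only [hy0def]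
      omega
  have hcnt_entry : ∀ c : ℕ, entryCount B.1 c = cntY y0 c := by
    intro c
    rw [entryCount, cntY]
    congr 1
    apply Finset.filter_congr
    intro l _
    have := hble l
    simp only [rootVec, hy0def]
    constructor
    · intro h
      omega
    · intro h
      omega
  have hbd0 : ∀ i, y0 i ≤ M := by
    intro i
    apply hMmax
    rw [hcnt_entry]
    have : i ∈ Finset.univ.filter (fun l => y0 l = y0 i) := by simp
    exact Finset.card_ne_zero_of_mem this
  have hMwit : ∃ i, y0 i = M := by
    have hne : (Finset.univ.filter (fun l : Fin n => y0 l = M)).Nonempty := by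
      rw [← Finset.card_pos]
      show 0 < cntY y0 M
      rw [← hcnt_entry]
      omega
    obtain ⟨i, hi⟩ := hne
    simp only [Finset.mem_filter, Finset.mem_univ, true_and] at hi
    exact ⟨i, hi⟩
  have hsurj0 : ∀ c, c ≤ M → ∃ i, y0 i = c := by
    intro c hc
    obtain ⟨jM, hjM⟩ := hMwit
    set T := Finset.univ.filter (fun i : Fin n => c ≤ y0 i) with hT
    have hTne : T.Nonempty := ⟨jM, by simp [hT, hjM, hc]⟩
    set i0 := T.min' hTne with hi0def
    have hi0mem : c ≤ y0 i0 := by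
      have := T.min'_mem hTne
      simp only [hT, Finset.mem_filter, Finset.mem_univ, true_and] at this
      exact this
    refine ⟨i0, ?_⟩
    by_contra hcon
    have hclt : c < y0 i0 := by omega
    have hi0pos : 0 < (i0 : ℕ) := by
      by_contra hz
      have hb := hvalY0.1 i0
      omega
    have hJlt' : (i0 : ℕ) - 1 < n := by
      have := i0.isLt
      omega
    set J : Fin n := ⟨(i0 : ℕ) - 1, hJlt'⟩ with hJ
    have hJv : (J : ℕ) = (i0 : ℕ) - 1 := rfl
    have hJltI : J < i0 := by
      rw [Fin.lt_def]
      omega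
    have hJnot : J ∉ T := fun hmem => absurd (T.min'_le J hmem) (not_le.2 hJltI)
    simp only [hT, Finset.mem_filter, Finset.mem_univ, true_and, not_le] at hJnot
    have hadj := hvalY0.2 J i0 (le_of_lt hJltI)
    omega
  have hcond0 : ∀ c, c + 1 < M → 1 < cntY y0 c → 1 < cntY y0 (c+1) := by
    intro c hc hcc
    rw [← hcnt_entry]
    rw [← hcnt_entry] at hcc
    exact hcond c hc hcc
  obtain ⟨y', hreach, hfinal⟩ := reach_staircase n y0 M hvalY0 hbd0 hsurj0 hcond0
  -- rook equivalence of every reachable board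
  have hequiv : ∀ (w : Fin n → ℕ), ValidY w →
      Multiset.map w Finset.univ.val = Multiset.map y0 Finset.univ.val →
      RookEquiv (bdY w) B.1 := by
    intro w hw hms
    apply rookEquiv_of_rootVec_multiset (bdY w) B.1 (bdY_mono hw) B.2
    rw [ms_rootVec_neg w hw, hms, ← ms_rootVec_neg y0 hvalY0, hbdY0]
  -- reachability in the graph
  have hreachG : ∀ (w : Fin n → ℕ) (hre : ReachY y0 w),
      (rookEquivGraph B).Reachable ⟨B, fun _ => rfl⟩
        ⟨⟨bdY w, bdY_mono (reachY_valid hre hvalY0)⟩,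
          hequiv w (reachY_valid hre hvalY0) (reachY_ms hre)⟩ := by
    intro w hre
    induction hre with
    | refl =>
        have hvert : (⟨⟨bdY y0, bdY_mono (reachY_valid Relation.ReflTransGen.refl hvalY0)⟩,
            hequiv y0 (reachY_valid Relation.ReflTransGen.refl hvalY0)
              (reachY_ms Relation.ReflTransGen.refl)⟩ :
            {C : FerrersBoard n // RookEquiv C.1 B.1}) = ⟨B, fun _ => rfl⟩ := by
          apply Subtype.ext
          apply Subtype.ext
          exact hbdY0
        rw [hvert]
    | @tail wb wc hab hbc ih =>
        have hvb : ValidY wb := reachY_valid hab hvalY0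
        have hvc : ValidY wc := hbc.2
        obtain ⟨hmv, hne⟩ := moves_of_step hvb hvc hbc.1
        have hadj : (rookEquivGraph B).Adj
            ⟨⟨bdY wb, bdY_mono (reachY_valid hab hvalY0)⟩,
              hequiv wb (reachY_valid hab hvalY0) (reachY_ms hab)⟩
            ⟨⟨bdY wc, bdY_mono (reachY_valid (Relation.ReflTransGen.tail hab hbc) hvalY0)⟩,
              hequiv wc (reachY_valid (Relation.ReflTransGen.tail hab hbc) hvalY0)
                (reachY_ms (Relation.ReflTransGen.tail hab hbc))⟩ := by
          rw [rookEquivGraph, SimpleGraph.fromRel_adj]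
          constructor
          · intro hcon
            apply hne
            have h1 := congrArg (fun t => t.1.1) hcon
            exact h1
          · exact Or.inl hmv
        exact SimpleGraph.Reachable.trans ih (SimpleGraph.Adj.reachable hadj)
  refine ⟨⟨⟨bdY y', bdY_mono (reachY_valid hreach hvalY0)⟩,
      hequiv y' (reachY_valid hreach hvalY0) (reachY_ms hreach)⟩, hreachG y' hreach, ?_⟩
  intro i hi
  have hv' := reachY_valid hreach hvalY0
  have h1 := hv'.1 i
  have h2 := hfinal i hi
  simp only [rootVec, bdY]
  omega
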